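/- Let n ≥ 4 and let 𝒫 be a partition of {1,…,n} that contains some part P with 2 ≤ |P| ≤ n−2. Then the orbit of 𝒫 under the natural action of Sym_n on partitions of {1,…,n} has size at least n(n−1)/4. -/

import Mathlib

open Nat
set_option maxHeartbeats 1000000

lemma choose_mono_mid {N a b : ℕ} (hab : a ≤ b) (hb : b ≤ N / 2) :
    N.choose a ≤ N.choose b := by
  induction b with
  | zero => simp [Nat.le_zero.mp hab]
  | succ b ih =>
    rcases Nat.lt_or_ge a (b+1) with h | h
    · exact le_trans (ih (Nat.lt_succ_iff.mp h) (le_trans (Nat.le_succ b) hb))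
        (Nat.choose_le_succ_of_lt_half_left (Nat.lt_of_succ_le hb))
    · have : a = b + 1 := le_antisymm hab h
      simp [this]

lemma choose_ge_of_between {N a b : ℕ} (hab : a ≤ b) (hb : b ≤ N - a) :
    N.choose a ≤ N.choose b := by
  have hbN : b ≤ N := le_trans hb (Nat.sub_le _ _)
  rcases le_or_gt b (N / 2) with h | h
  · exact choose_mono_mid hab h
  · rw [← Nat.choose_symm hbN]
    have h1 : a ≤ N - b := by omega
    have h2 : N - b ≤ N / 2 := by omega
    exact choose_mono_mid h1 h2

lemma choose_ge_self {N r : ℕ} (h1 : 1 ≤ r) (h2 : r ≤ N - 1) : N ≤ N.choose r := by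
  have := choose_ge_of_between h1 h2
  simpa using this

lemma choose_mul_id {n k : ℕ} (hk : 1 ≤ k) (hkn : k ≤ n) :
    k * n.choose k = n * (n-1).choose (k-1) := by
  obtain ⟨n', rfl⟩ : ∃ n', n = n' + 1 := ⟨n - 1, by omega⟩
  obtain ⟨k', rfl⟩ : ∃ k', k = k' + 1 := ⟨k - 1, by omega⟩
  have := Nat.add_one_mul_choose_eq n' k'
  simp only [Nat.add_sub_cancel]
  rw [mul_comm]
  exact this.symm

-- main arithmetic inequality for the m ≥ 2 case
lemma ineq2 {n k m : ℕ} (hk : 2 ≤ k) (hm : 2 ≤ m) (hkm : k * m ≤ n) :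
    n * (n-1) * (m * m - m) ≤ 4 * (n.choose k * (n-k).choose k) := by
  have hn4 : 4 ≤ n := le_trans (by nlinarith) hkm
  -- step 1 : (m*m - m) * (k*k) ≤ n * (n-k)
  have st1 : (m * m - m) * (k * k) ≤ n * (n - k) := by
    have h1 : k * m ≤ n := hkm
    have h2 : k * (m - 1) ≤ n - k := by
      have : k * m - k ≤ n - k := by omega
      have e : k * (m - 1) = k * m - k := by
        cases m with
        | zero => omega
        | succ m' => simp [Nat.mul_succ]
      omega
    calc (m * m - m) * (k * k) = (k * m) * (k * (m-1)) := by
          obtain ⟨m', rfl⟩ : ∃ m', m = m' + 1 := ⟨m - 1, by omega⟩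
          simp only [Nat.add_sub_cancel]
          calc ((m'+1) * (m'+1) - (m'+1)) * (k*k) = ((m'+1)*m') * (k*k) := by
                rw [Nat.mul_succ]; simp
            _ = (k*(m'+1))*(k*m') := by ring
        _ ≤ n * (n - k) := Nat.mul_le_mul h1 h2
  have h2k : 2 * k ≤ n := le_trans (by nlinarith) hkm
  -- step 4
  have key : n * (n-1) ≤ 4 * ((n-1).choose (k-1) * (n-k-1).choose (k-1)) := by
    rcases Nat.lt_or_ge (2*k) n with hlt | hge
    · have c1 : n - 1 ≤ (n-1).choose (k-1) := choose_ge_self (by omega) (by omega)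
      have c2 : n - k - 1 ≤ (n-k-1).choose (k-1) := choose_ge_self (by omega) (by omega)
      have h5 : n ≤ 4 * (n - k - 1) := by omega
      calc n * (n-1) ≤ (4 * (n-k-1)) * (n-1) := Nat.mul_le_mul_right _ h5
        _ = 4 * ((n-1) * (n-k-1)) := by ring
        _ ≤ 4 * ((n-1).choose (k-1) * (n-k-1).choose (k-1)) :=
            Nat.mul_le_mul_left _ (Nat.mul_le_mul c1 c2)
    · have heq : 2 * k = n := le_antisymm h2k hge
      have hnk1 : n - k - 1 = k - 1 := by omega
      have hone : (n-k-1).choose (k-1) = 1 := by rw [hnk1, Nat.choose_self]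
      rcases Nat.lt_or_ge k 3 with hk2 | hk3
      · have hk2' : k = 2 := by omega
        have hn' : n = 4 := by omega
        subst hn'; rw [hk2'] at hone ⊢
        norm_num [hone]
      · have c1 : (n-1).choose 2 ≤ (n-1).choose (k-1) :=
          choose_ge_of_between (by omega) (by omega)
        have c2 : 2 * ((n-1).choose 2) = (n-1) * (n-2) := by
          have := choose_mul_id (n := n-1) (k := 2) (by omega) (by omega)
          have h1 : (n-1-1).choose (2-1) = n - 2 := by
            have : n - 1 - 1 = n - 2 := by omega
            simp [this]
          rw [h1] at this
          exact this
        have h6 : n * (n-1) ≤ 2 * ((n-1) * (n-2)) := by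
          have : n ≤ 2 * (n-2) := by omega
          calc n * (n-1) ≤ (2*(n-2)) * (n-1) := Nat.mul_le_mul_right _ this
            _ = 2 * ((n-1)*(n-2)) := by ring
        calc n * (n-1) ≤ 2 * ((n-1) * (n-2)) := h6
          _ = 4 * ((n-1).choose 2) := by omega
          _ ≤ 4 * ((n-1).choose (k-1) * (n-k-1).choose (k-1)) := by
              rw [hone]; simpa using Nat.mul_le_mul_left 4 c1
  -- step 3
  have id1 : k * n.choose k = n * (n-1).choose (k-1) := choose_mul_id (by omega) (by omega)
  have id2 : k * (n-k).choose k = (n-k) * (n-k-1).choose (k-1) := by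
    have := choose_mul_id (n := n-k) (k := k) (by omega) (by omega)
    have h7 : n - k - 1 = (n-k) - 1 := by omega
    rw [h7]; exact this
  have st3 : (n * (n-1)) * (n * (n-k)) ≤ (4 * (n.choose k * (n-k).choose k)) * (k * k) := by
    calc (n * (n-1)) * (n * (n-k))
        ≤ (4 * ((n-1).choose (k-1) * (n-k-1).choose (k-1))) * (n * (n-k)) :=
          Nat.mul_le_mul_right _ key
      _ = 4 * ((n * (n-1).choose (k-1)) * ((n-k) * (n-k-1).choose (k-1))) := by ring
      _ = 4 * ((k * n.choose k) * (k * (n-k).choose k)) := by rw [id1, id2]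
      _ = (4 * (n.choose k * (n-k).choose k)) * (k * k) := by ring
  -- combine
  have final : (n * (n-1) * (m * m - m)) * (k * k) ≤ (4 * (n.choose k * (n-k).choose k)) * (k * k) := by
    calc (n * (n-1) * (m * m - m)) * (k * k) = (n * (n-1)) * ((m*m-m) * (k*k)) := by ring
      _ ≤ (n * (n-1)) * (n * (n-k)) := Nat.mul_le_mul_left _ st1
      _ ≤ (4 * (n.choose k * (n-k).choose k)) * (k * k) := st3
  exact Nat.le_of_mul_le_mul_right final (by positivity)

lemma exists_perm_image {α : Type*} [Fintype α] {s t : Set α} (h : s.ncard = t.ncard) :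
    ∃ π : Equiv.Perm α, π '' s = t := by
  classical
  have hcard : Fintype.card s = Fintype.card t := by
    rw [← Set.toFinset_card, ← Set.toFinset_card,
      ← Set.ncard_eq_toFinset_card', ← Set.ncard_eq_toFinset_card']
    exact h
  have hcard' : Fintype.card (↥sᶜ) = Fintype.card (↥tᶜ) := by
    rw [Fintype.card_compl_set, Fintype.card_compl_set, hcard]
  obtain ⟨e⟩ := Fintype.card_eq.mp hcard
  obtain ⟨e'⟩ := Fintype.card_eq.mp hcard'
  refine ⟨(Equiv.Set.sumCompl s).symm.trans ((e.sumCongr e').trans (Equiv.Set.sumCompl t)), ?_⟩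
  apply Set.eq_of_subset_of_ncard_le
  · rintro y ⟨x, hx, rfl⟩
    simp only [Equiv.trans_apply, Equiv.Set.sumCompl_symm_apply_of_mem hx,
      Equiv.sumCongr_apply, Sum.map_inl, Equiv.Set.sumCompl_apply_inl]
    exact (e ⟨x, hx⟩).2
  · rw [Set.ncard_image_of_injective _ (Equiv.injective _)]
    exact h.ge
  · exact Set.toFinite t

lemma exists_perm_image_pair {α : Type*} [Fintype α] {s₁ s₂ t₁ t₂ : Set α}
    (hs : Disjoint s₁ s₂) (ht : Disjoint t₁ t₂)
    (h1 : s₁.ncard = t₁.ncard) (h2 : s₂.ncard = t₂.ncard) :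
    ∃ π : Equiv.Perm α, π '' s₁ = t₁ ∧ π '' s₂ = t₂ := by
  classical
  obtain ⟨π₁, hπ₁⟩ := exists_perm_image h1
  set u : Set α := π₁ '' s₂ with hu
  have husub : u ⊆ t₁ᶜ := by
    rw [← hπ₁]
    rintro y ⟨x, hx, rfl⟩
    simp only [Set.mem_compl_iff]
    rintro ⟨x', hx', hxx⟩
    have : x = x' := π₁.injective hxx.symm
    subst this
    exact (Set.disjoint_left.mp hs hx') hx
  have htsub : t₂ ⊆ t₁ᶜ := fun y hy => Set.disjoint_right.mp ht hy
  set u' : Set (↥(t₁ᶜ)) := Subtype.val ⁻¹' u with hu'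
  set t' : Set (↥(t₁ᶜ)) := Subtype.val ⁻¹' t₂ with ht'
  have im_u : Subtype.val '' u' = u := by
    rw [hu', Subtype.image_preimage_coe]
    exact Set.inter_eq_right.mpr husub
  have im_t : Subtype.val '' t' = t₂ := by
    rw [ht', Subtype.image_preimage_coe]
    exact Set.inter_eq_right.mpr htsub
  have hcard : u'.ncard = t'.ncard := by
    have e1 : (Subtype.val '' u').ncard = u'.ncard :=
      Set.ncard_image_of_injective _ Subtype.val_injective
    have e2 : (Subtype.val '' t').ncard = t'.ncard :=
      Set.ncard_image_of_injective _ Subtype.val_injective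
    have e3 : u.ncard = s₂.ncard := Set.ncard_image_of_injective _ π₁.injective
    rw [im_u] at e1; rw [im_t] at e2
    omega
  obtain ⟨ρ, hρ⟩ := exists_perm_image hcard
  set π₂ : Equiv.Perm α := Equiv.Perm.ofSubtype ρ with hπ₂
  refine ⟨π₂ * π₁, ?_, ?_⟩
  · have : (π₂ * π₁) '' s₁ = π₂ '' t₁ := by
      rw [← hπ₁, ← Set.image_comp]; rfl
    rw [this]
    have : ∀ x ∈ t₁, π₂ x = x := by
      intro x hx
      exact Equiv.Perm.ofSubtype_apply_of_not_mem ρ (by simpa using hx)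
    ext y; constructor
    · rintro ⟨x, hx, rfl⟩; rwa [this x hx]
    · intro hy; exact ⟨y, hy, this y hy⟩
  · have step : (π₂ * π₁) '' s₂ = π₂ '' u := by
      rw [hu, ← Set.image_comp]; rfl
    rw [step, ← im_u, ← Set.image_comp]
    have comm : ∀ z : ↥(t₁ᶜ), (π₂ ∘ Subtype.val) z = Subtype.val (ρ z) := by
      intro z
      simp only [Function.comp_apply, hπ₂]
      exact Equiv.Perm.ofSubtype_apply_coe ρ z
    calc (π₂ ∘ Subtype.val) '' u' = (Subtype.val ∘ ρ) '' u' := by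
          apply Set.image_congr; intro z _; exact comm z
      _ = Subtype.val '' (ρ '' u') := by rw [Set.image_comp]
      _ = Subtype.val '' t' := by rw [hρ]
      _ = t₂ := im_t

/-- If a partition `𝔓` of `{1,…,n}` (with `n ≥ 4`) has a part `P` with
`2 ≤ |P| ≤ n − 2`, then the orbit of `𝔓` under the action of `Sym_n` on partitions
has size at least `n(n−1)/4`. -/
theorem orbit_partition_large (n : ℕ) (hn : 4 ≤ n) (𝔓 : Set (Set (Fin n)))
    (h𝔓 : Setoid.IsPartition 𝔓) (P : Set (Fin n)) (hP : P ∈ 𝔓)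
    (h2 : 2 ≤ P.ncard) (hn2 : P.ncard ≤ n - 2) :
    n * (n - 1) ≤ 4 * {Q : Set (Set (Fin n)) |
        ∃ π : Equiv.Perm (Fin n), Q = (fun A => π '' A) '' 𝔓}.ncard := by
  classical
  set Orbit : Set (Set (Set (Fin n))) := {Q : Set (Set (Fin n)) |
      ∃ π : Equiv.Perm (Fin n), Q = (fun A => π '' A) '' 𝔓} with hOrbit
  set k := P.ncard with hkdef
  set Pk : Set (Set (Fin n)) := {A : Set (Fin n) | A ∈ 𝔓 ∧ A.ncard = k} with hPkdef
  set m := Pk.ncard with hmdef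
  have hPmem : P ∈ Pk := ⟨hP, rfl⟩
  have hm1 : 1 ≤ m := (Set.ncard_pos (Set.toFinite Pk)).mpr ⟨P, hPmem⟩
  -- the "size-k parts" map
  set sk : Set (Set (Fin n)) → Set (Set (Fin n)) := fun Q => {A | A ∈ Q ∧ A.ncard = k}
    with hskdef
  have F1 : ∀ π : Equiv.Perm (Fin n), sk ((fun A => π '' A) '' 𝔓)
      = (fun A => π '' A) '' Pk := by
    intro π
    ext X
    constructor
    · rintro ⟨⟨B, hB, rfl⟩, hcard⟩
      refine ⟨B, ⟨hB, ?_⟩, rfl⟩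
      rwa [Set.ncard_image_of_injective _ π.injective] at hcard
    · rintro ⟨B, ⟨hB, hBk⟩, rfl⟩
      exact ⟨⟨B, hB, rfl⟩, by rwa [Set.ncard_image_of_injective _ π.injective]⟩
  have F2 : ∀ Q ∈ Orbit, (sk Q).ncard = m := by
    rintro Q ⟨π, rfl⟩
    rw [F1 π]
    exact Set.ncard_image_of_injective _ (Set.image_injective.mpr π.injective)
  -- disjointness of parts
  have hdisj : ∀ A ∈ 𝔓, ∀ B ∈ 𝔓, A ≠ B → Disjoint A B := by
    intro A hA B hB hAB
    exact h𝔓.pairwiseDisjoint hA hB hAB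
  -- k * m ≤ n
  have hkm : k * m ≤ n := by
    set PkF : Finset (Set (Fin n)) := (Set.toFinite Pk).toFinset with hPkF
    have hPkFcard : PkF.card = m := by
      rw [hPkF, hmdef, Set.ncard_eq_toFinset_card _ (Set.toFinite Pk)]
    have hbi : (PkF.biUnion (fun A => A.toFinset)).card
        = ∑ A ∈ PkF, A.toFinset.card := by
      apply Finset.card_biUnion
      intro A hA B hB hAB
      rw [Function.onFun, Set.disjoint_toFinset]
      have hA' : A ∈ Pk := by rwa [hPkF, Finset.mem_coe, Set.Finite.mem_toFinset] at hA
      have hB' : B ∈ Pk := by rwa [hPkF, Finset.mem_coe, Set.Finite.mem_toFinset] at hB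
      exact hdisj A hA'.1 B hB'.1 hAB
    have hsum : ∑ A ∈ PkF, A.toFinset.card = m * k := by
      rw [Finset.sum_congr rfl (fun A hA => ?_), Finset.sum_const, hPkFcard, smul_eq_mul]
      have hA' : A ∈ Pk := by rwa [hPkF, Set.Finite.mem_toFinset] at hA
      rw [← Set.ncard_eq_toFinset_card']
      exact hA'.2
    calc k * m = m * k := Nat.mul_comm _ _
      _ = (PkF.biUnion (fun A => A.toFinset)).card := by rw [hbi, hsum]
      _ ≤ Fintype.card (Fin n) := Finset.card_le_univ _
      _ = n := Fintype.card_fin n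
  set O : Finset (Set (Set (Fin n))) := (Set.toFinite Orbit).toFinset with hO
  have hOcard : Orbit.ncard = O.card := Set.ncard_eq_toFinset_card _ (Set.toFinite Orbit)
  rw [hOcard]
  rcases Nat.lt_or_ge m 2 with hm2 | hm2
  · -- m = 1 case
    have hmone : m = 1 := le_antisymm (by omega) hm1
    have hPkone : Pk = {P} := by
      have h1 : Pk.ncard = 1 := by rw [← hmdef]; exact hmone
      obtain ⟨a, ha⟩ := Set.ncard_eq_one.mp h1
      rw [ha] at hPmem ⊢
      simp at hPmem
      rw [hPmem]
    -- injection from k-subsets into orbit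
    have hinj : (Finset.univ.powersetCard k : Finset (Finset (Fin n))).card ≤ O.card := by
      have hex : ∀ A ∈ (Finset.univ.powersetCard k : Finset (Finset (Fin n))),
          ∃ Q, Q ∈ Orbit ∧ sk Q = {(A : Set (Fin n))} := by
        intro A hA
        have hAcard : (A : Set (Fin n)).ncard = k := by
          rw [Set.ncard_coe_finset]
          exact (Finset.mem_powersetCard_univ).mp hA
        obtain ⟨π, hπ⟩ := exists_perm_image (s := P) (t := (A : Set (Fin n)))
          (by rw [hAcard])
        refine ⟨(fun A => π '' A) '' 𝔓, ⟨π, rfl⟩, ?_⟩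
        rw [F1 π, hPkone]
        simp [hπ]
      set g : Finset (Fin n) → Set (Set (Fin n)) := fun A =>
        if h : ∃ Q, Q ∈ Orbit ∧ sk Q = {(A : Set (Fin n))} then h.choose else ∅ with hg
      apply Finset.card_le_card_of_injOn g
      · intro A hA
        have h := hex A hA
        rw [hg]
        simp only [dif_pos h]
        rw [hO, Finset.mem_coe, Set.Finite.mem_toFinset]
        exact h.choose_spec.1
      · intro A hA B hB hAB
        have hA' := hex A hA
        have hB' := hex B hB
        rw [hg] at hAB
        simp only [dif_pos hA', dif_pos hB'] at hAB
        have e3 : ({(A : Set (Fin n))} : Set (Set (Fin n))) = {(B : Set (Fin n))} := by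
          rw [← hA'.choose_spec.2, ← hB'.choose_spec.2, hAB]
        have : (A : Set (Fin n)) = (B : Set (Fin n)) := by
          simpa using e3
        exact Finset.coe_injective this
    have hpow : (Finset.univ.powersetCard k : Finset (Finset (Fin n))).card = n.choose k := by
      rw [Finset.card_powersetCard, Finset.card_univ, Fintype.card_fin]
    have hch : n.choose 2 ≤ n.choose k := choose_ge_of_between h2 hn2
    have hch2 : 2 * n.choose 2 = n * (n-1) := by
      have := choose_mul_id (n := n) (k := 2) (by omega) (by omega)
      have h1 : (n-1).choose (2-1) = n - 1 := by norm_num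
      rw [h1] at this
      exact this
    omega
  · -- m ≥ 2 case
    obtain ⟨P₁, hP₁, P₂, hP₂, hP12⟩ := (Set.one_lt_ncard (Set.toFinite Pk)).mp
      (by omega : 1 < Pk.ncard)
    have hdisj12 : Disjoint P₁ P₂ := hdisj P₁ hP₁.1 P₂ hP₂.1 hP12
    set Sf : Finset (Σ _ : Finset (Fin n), Finset (Fin n)) :=
      (Finset.univ.powersetCard k).sigma (fun A => (Aᶜ.powersetCard k)) with hSf
    have hSfcard : Sf.card = n.choose k * (n-k).choose k := by
      rw [hSf, Finset.card_sigma]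
      have hc : ∀ A ∈ (Finset.univ.powersetCard k : Finset (Finset (Fin n))),
          (Aᶜ.powersetCard k).card = (n-k).choose k := by
        intro A hA
        rw [Finset.card_powersetCard, Finset.card_compl, Fintype.card_fin,
          Finset.mem_powersetCard_univ.mp hA]
      rw [Finset.sum_congr rfl hc, Finset.sum_const, Finset.card_powersetCard,
        Finset.card_univ, Fintype.card_fin, smul_eq_mul]
    have hex : ∀ x ∈ Sf, ∃ Q, Q ∈ Orbit ∧ ((↑x.1 : Set (Fin n)) ∈ sk Q ∧
        (↑x.2 : Set (Fin n)) ∈ sk Q) := by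
      intro x hx
      rw [hSf, Finset.mem_sigma] at hx
      obtain ⟨hx1, hx2⟩ := hx
      have hc1 : (↑x.1 : Set (Fin n)).ncard = k := by
        rw [Set.ncard_coe_finset]; exact Finset.mem_powersetCard_univ.mp hx1
      obtain ⟨hx2sub, hx2card⟩ := Finset.mem_powersetCard.mp hx2
      have hc2 : (↑x.2 : Set (Fin n)).ncard = k := by
        rw [Set.ncard_coe_finset]; exact hx2card
      have hdisjx : Disjoint (↑x.1 : Set (Fin n)) (↑x.2 : Set (Fin n)) := by
        rw [Finset.disjoint_coe]
        exact Finset.disjoint_left.mpr (fun a h1 h2' => (Finset.mem_compl.mp (hx2sub h2')) h1)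
      obtain ⟨π, hπ1, hπ2⟩ := exists_perm_image_pair hdisj12 hdisjx
        (by rw [hP₁.2, hc1]) (by rw [hP₂.2, hc2])
      refine ⟨(fun A => π '' A) '' 𝔓, ⟨π, rfl⟩, ⟨⟨P₁, hP₁.1, hπ1⟩, hc1⟩, ⟨P₂, hP₂.1, hπ2⟩, hc2⟩
    set g : (Σ _ : Finset (Fin n), Finset (Fin n)) → Set (Set (Fin n)) := fun x =>
      if h : ∃ Q, Q ∈ Orbit ∧ ((↑x.1 : Set (Fin n)) ∈ sk Q ∧ (↑x.2 : Set (Fin n)) ∈ sk Q)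
      then h.choose else ∅ with hg
    have hgmem : ∀ x ∈ Sf, g x ∈ Orbit ∧ ((↑x.1 : Set (Fin n)) ∈ sk (g x) ∧
        (↑x.2 : Set (Fin n)) ∈ sk (g x)) := by
      intro x hx
      have h := hex x hx
      rw [hg]; simp only [dif_pos h]
      exact h.choose_spec
    have hmain : Sf.card ≤ (m*m - m) * (Sf.image g).card := by
      apply Finset.card_le_mul_card_image
      intro b hb
      obtain ⟨x₀, hx₀, hgx₀⟩ := Finset.mem_image.mp hb
      have hbO : b ∈ Orbit := hgx₀ ▸ (hgmem x₀ hx₀).1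
      set T : Finset (Set (Fin n)) := (Set.toFinite (sk b)).toFinset with hT
      have hTcard : T.card = m := by
        rw [hT, ← Set.ncard_eq_toFinset_card _ (Set.toFinite (sk b))]
        exact F2 b hbO
      have hstep : (Sf.filter (fun x => g x = b)).card ≤ T.offDiag.card := by
        apply Finset.card_le_card_of_injOn
          (fun x => ((↑x.1 : Set (Fin n)), (↑x.2 : Set (Fin n))))
        · intro x hx
          rw [Finset.mem_coe, Finset.mem_filter] at hx
          obtain ⟨hxS, hxb⟩ := hx
          have h3 := hgmem x hxS
          rw [hxb] at h3
          rw [hSf, Finset.mem_sigma] at hxS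
          obtain ⟨hx2sub, hx2card⟩ := Finset.mem_powersetCard.mp hxS.2
          rw [Finset.mem_coe, Finset.mem_offDiag]
          refine ⟨?_, ?_, ?_⟩
          · rw [hT, Set.Finite.mem_toFinset]; exact h3.2.1
          · rw [hT, Set.Finite.mem_toFinset]; exact h3.2.2
          · intro heq
            have hfin : x.1 = x.2 := Finset.coe_injective heq
            obtain ⟨a, ha⟩ := Finset.card_pos.mp (by omega : 0 < x.2.card)
            exact (Finset.mem_compl.mp (hx2sub ha)) (hfin ▸ ha)
        · intro x hx y hy hxy
          simp only [Prod.mk.injEq] at hxy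
          obtain ⟨x1, x2⟩ := x
          obtain ⟨y1, y2⟩ := y
          have e1 : x1 = y1 := Finset.coe_injective hxy.1
          have e2 : x2 = y2 := Finset.coe_injective hxy.2
          subst e1; subst e2; rfl
      calc (Sf.filter fun x => g x = b).card ≤ T.offDiag.card := hstep
        _ = m*m - m := by rw [Finset.offDiag_card, hTcard]
    have himg : (Sf.image g).card ≤ O.card := by
      apply Finset.card_le_card
      intro b hb
      obtain ⟨x₀, hx₀, hgx₀⟩ := Finset.mem_image.mp hb
      rw [hO, Set.Finite.mem_toFinset]
      exact hgx₀ ▸ (hgmem x₀ hx₀).1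
    have hineq := ineq2 h2 hm2 hkm
    have h4 : n.choose k * (n-k).choose k ≤ (m*m-m) * O.card := by
      calc n.choose k * (n-k).choose k = Sf.card := hSfcard.symm
        _ ≤ (m*m-m)*(Sf.image g).card := hmain
        _ ≤ (m*m-m)*O.card := Nat.mul_le_mul_left _ himg
    have h5 : (m*m-m) * (n*(n-1)) ≤ (m*m-m) * (4*O.card) := by
      calc (m*m-m)*(n*(n-1)) = n*(n-1)*(m*m-m) := by ring
        _ ≤ 4*(n.choose k * (n-k).choose k) := hineq
        _ ≤ 4*((m*m-m)*O.card) := Nat.mul_le_mul_left _ h4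
        _ = (m*m-m)*(4*O.card) := by ring
    exact Nat.le_of_mul_le_mul_left h5
      (by have : m*2 ≤ m*m := Nat.mul_le_mul_left m hm2; omega)
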